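/- (Double robustness of Λ₂^⊥ elements.) Let ε(m) = Y₁e^{−β(X)D₁} − Y₀e^{−β(X)D₀+m(X)}, λ(X,Z) = E(Y₀e^{−β(X)D₀} | Z, X)/E(Y₀e^{−β(X)D₀} | X), and σ²(X,Z) = E(ε² | X, Z). Suppose the true m₀ satisfies E{ε(m₀) | X, Z} = 0. Define d*(X,Z) = [λ(X,Z)σ^{−2}(X,Z) / E{λ²(X,Z)σ^{−2}(X,Z) | X}]·E{d(X,Z)λ(X,Z) | X}. Then for any function m (possibly ≠ m₀) and any vector function d(X,Z), E{[d(X,Z) − d*(X,Z)]·ε(m)} = 0. -/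

import Mathlib

open MeasureTheory ProbabilityTheory Real

lemma integral_mul_eq_integral_mul_condExp {Ω : Type*} {mΩ : MeasurableSpace Ω}
    (μ : Measure Ω) [IsProbabilityMeasure μ]
    {m : MeasurableSpace Ω} (hm : m ≤ mΩ)
    {g h : Ω → ℝ} (hg : Integrable g μ) (hh : StronglyMeasurable[m] h)
    {C : ℝ} (hbd : ∀ ω, |h ω| ≤ C) :
    ∫ ω, h ω * g ω ∂μ = ∫ ω, h ω * (μ[g|m]) ω ∂μ := by
  have hhg : Integrable (fun ω => h ω * g ω) μ :=
    hg.bdd_mul (hh.mono hm).aestronglyMeasurable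
      (ae_of_all _ fun ω => by simpa [Real.norm_eq_abs] using hbd ω)
  have h1 : μ[(fun ω => h ω * g ω)|m] =ᵐ[μ] fun ω => h ω * (μ[g|m]) ω :=
    condExp_mul_of_stronglyMeasurable_left hh hhg hg
  calc ∫ ω, h ω * g ω ∂μ = ∫ ω, (μ[(fun ω => h ω * g ω)|m]) ω ∂μ :=
        (integral_condExp hm).symm
    _ = ∫ ω, h ω * (μ[g|m]) ω ∂μ := integral_congr_ae h1

/-- Double robustness of the elements of Λ₂^⊥: for any (possibly
misspecified) m and any function d(X,Z), E{[d(X,Z) − d*(X,Z)]·ε(m)} = 0. -/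
theorem double_robustness_Lambda2_perp
    {Ω : Type*} {mΩ : MeasurableSpace Ω}
    (μ : Measure Ω) [IsProbabilityMeasure μ]
    (mX mXZ : MeasurableSpace Ω) (hle : mX ≤ mXZ) (hXZ : mXZ ≤ mΩ)
    (D₀ D₁ Y₀ Y₁ βX m₀X mXfun : Ω → ℝ)
    (hβX : StronglyMeasurable[mX] βX)
    (hm₀X : StronglyMeasurable[mX] m₀X) (hmXfun : StronglyMeasurable[mX] mXfun)
    (W : Ω → ℝ) (hW : W = fun ω => Y₀ ω * Real.exp (-(βX ω) * D₀ ω))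
    (hWint : Integrable W μ)
    (hWpos : ∀ᵐ ω ∂μ, 0 < (μ[W | mX]) ω)
    -- true model: E{ε(m₀) | X, Z} = 0
    (htrue : μ[fun ω => Y₁ ω * Real.exp (-(βX ω) * D₁ ω) | mXZ]
      =ᵐ[μ] fun ω => (μ[W | mXZ]) ω * Real.exp (m₀X ω))
    -- λ(X,Z)
    (lam : Ω → ℝ) (hlamMeas : StronglyMeasurable[mXZ] lam)
    (hlam : lam =ᵐ[μ] fun ω => (μ[W | mXZ]) ω / (μ[W | mX]) ω)
    -- σ²(X,Z) = E(ε² | X, Z) at the true model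
    (εtrue : Ω → ℝ)
    (hεtrue : εtrue = fun ω => Y₁ ω * Real.exp (-(βX ω) * D₁ ω)
                - Y₀ ω * Real.exp (-(βX ω) * D₀ ω + m₀X ω))
    (σsq : Ω → ℝ) (hσMeas : StronglyMeasurable[mXZ] σsq)
    (hσsq : σsq =ᵐ[μ] μ[fun ω => εtrue ω ^ 2 | mXZ])
    (hσpos : ∀ᵐ ω ∂μ, 0 < σsq ω)
    -- the given index function d(X,Z)
    (d : Ω → ℝ) (hdMeas : StronglyMeasurable[mXZ] d)
    (hdenpos : ∀ᵐ ω ∂μ, 0 < (μ[fun ω' => lam ω' ^ 2 * (σsq ω')⁻¹ | mX]) ω)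
    -- d*(X,Z)
    (dstar : Ω → ℝ)
    (hdstar : dstar =ᵐ[μ] fun ω =>
      lam ω * (σsq ω)⁻¹ / (μ[fun ω' => lam ω' ^ 2 * (σsq ω')⁻¹ | mX]) ω
        * (μ[fun ω' => d ω' * lam ω' | mX]) ω)
    -- possibly misspecified residual ε(m)
    (ε : Ω → ℝ)
    (hε : ε = fun ω => Y₁ ω * Real.exp (-(βX ω) * D₁ ω)
                - Y₀ ω * Real.exp (-(βX ω) * D₀ ω + mXfun ω))
    -- integrability of everything appearing
    (hεint : Integrable ε μ)
    (hint : Integrable (fun ω => (d ω - dstar ω) * ε ω) μ)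
    (hint2 : Integrable (fun ω => d ω * lam ω) μ)
    (hint3 : Integrable (fun ω => lam ω ^ 2 * (σsq ω)⁻¹) μ) :
    ∫ ω, (d ω - dstar ω) * ε ω ∂μ = 0 := by
  haveI : (MeasureTheory.ae μ).NeBot := ae_neBot.2 (IsProbabilityMeasure.ne_zero μ)
  have hmfin : mX ≤ mΩ := hle.trans hXZ
  -- A and B decomposition of ε
  have hεAB : ε = (fun ω => Y₁ ω * Real.exp (-(βX ω) * D₁ ω))
      - (fun ω => W ω * Real.exp (mXfun ω)) := by
    funext ω
    simp only [hε, hW, Pi.sub_apply, Real.exp_add]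
    ring
  -- A is integrable
  have hAint : Integrable (fun ω => Y₁ ω * Real.exp (-(βX ω) * D₁ ω)) μ := by
    by_contra hA
    have h0 : μ[(fun ω => Y₁ ω * Real.exp (-(βX ω) * D₁ ω))|mXZ] = 0 := condExp_of_not_integrable hA
    rw [h0] at htrue
    have hWXZ0 : μ[W|mXZ] =ᵐ[μ] 0 := by
      filter_upwards [htrue.symm] with ω hω
      have : (μ[W|mXZ]) ω * Real.exp (m₀X ω) = 0 := by simpa using hω
      rcases mul_eq_zero.1 this with h | h
      · simpa using h
      · exact absurd h (Real.exp_ne_zero _)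
    have hWX0 : μ[W|mX] =ᵐ[μ] 0 := by
      have h1 : μ[μ[W|mXZ]|mX] =ᵐ[μ] μ[W|mX] := condExp_condExp_of_le hle hXZ
      have h2 : μ[μ[W|mXZ]|mX] =ᵐ[μ] μ[(0 : Ω → ℝ)|mX] := condExp_congr_ae hWXZ0
      refine h1.symm.trans (h2.trans ?_)
      rw [condExp_zero]
    obtain ⟨ω, h1, h2⟩ := (hWpos.and hWX0).exists
    rw [h2] at h1; exact lt_irrefl 0 h1
  -- B is integrable
  have hBint : Integrable (fun ω => W ω * Real.exp (mXfun ω)) μ := by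
    have : (fun ω => W ω * Real.exp (mXfun ω))
        = (fun ω => Y₁ ω * Real.exp (-(βX ω) * D₁ ω)) - ε := by
      rw [hεAB]; funext ω; simp
    rw [this]; exact hAint.sub hεint
  -- conditional expectation of B
  have hexpSM : StronglyMeasurable[mXZ] (fun ω => Real.exp (mXfun ω)) :=
    Real.continuous_exp.comp_stronglyMeasurable (hmXfun.mono hle)
  have hcondB : μ[(fun ω => W ω * Real.exp (mXfun ω))|mXZ]
      =ᵐ[μ] fun ω => Real.exp (mXfun ω) * (μ[W|mXZ]) ω := by
    have h1 : (fun ω => W ω * Real.exp (mXfun ω))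
        = fun ω => Real.exp (mXfun ω) * W ω := by funext ω; ring
    rw [h1]
    exact condExp_mul_of_stronglyMeasurable_left hexpSM
      (hBint.congr (ae_of_all _ fun ω => mul_comm (W ω) (Real.exp (mXfun ω)))) hWint
  -- φ
  set φ : Ω → ℝ := fun ω => (μ[W|mX]) ω * (Real.exp (m₀X ω) - Real.exp (mXfun ω)) with hφdef
  have hφSM : StronglyMeasurable[mX] φ :=
    stronglyMeasurable_condExp.mul
      ((Real.continuous_exp.comp_stronglyMeasurable hm₀X).sub
        (Real.continuous_exp.comp_stronglyMeasurable hmXfun))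
  -- E[ε | X,Z] = λ φ
  have hcondε : μ[ε|mXZ] =ᵐ[μ] fun ω => lam ω * φ ω := by
    have hsub : μ[ε|mXZ] =ᵐ[μ]
        μ[(fun ω => Y₁ ω * Real.exp (-(βX ω) * D₁ ω))|mXZ]
          - μ[(fun ω => W ω * Real.exp (mXfun ω))|mXZ] := by
      rw [hεAB]; exact condExp_sub hAint hBint _
    filter_upwards [hsub, htrue, hcondB, hlam, hWpos] with ω h1 h2 h3 h4 h5
    rw [h1, Pi.sub_apply, h2, h3]
    have hq : lam ω * (μ[W|mX]) ω = (μ[W|mXZ]) ω := by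
      rw [h4]; exact div_mul_cancel₀ _ (ne_of_gt h5)
    simp only [hφdef]
    rw [← hq]; ring
  -- abbreviations
  set N : Ω → ℝ := μ[fun ω' => d ω' * lam ω'|mX] with hNdef
  set Dn : Ω → ℝ := μ[fun ω' => lam ω' ^ 2 * (σsq ω')⁻¹|mX] with hDndef
  set u : Ω → ℝ := fun ω => d ω - lam ω * (σsq ω)⁻¹ / Dn ω * N ω with hudef
  have huSM : StronglyMeasurable[mXZ] u :=
    (hdMeas.measurable.sub (((hlamMeas.measurable.mul hσMeas.measurable.inv).div
      ((stronglyMeasurable_condExp.mono hle).measurable)).mul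
      ((stronglyMeasurable_condExp.mono hle).measurable))).stronglyMeasurable
  have huε_eq : (fun ω => (d ω - dstar ω) * ε ω) =ᵐ[μ] fun ω => u ω * ε ω := by
    filter_upwards [hdstar] with ω hω
    rw [hudef]; simp only []; rw [hω]
  have huε_int : Integrable (fun ω => u ω * ε ω) μ := hint.congr huε_eq
  -- H
  set H : Ω → ℝ := fun ω => u ω * (lam ω * φ ω) with hHdef
  have hH : μ[(fun ω => u ω * ε ω)|mXZ] =ᵐ[μ] H := by
    have h1 : μ[(fun ω => u ω * ε ω)|mXZ] =ᵐ[μ] fun ω => u ω * (μ[ε|mXZ]) ω :=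
      condExp_mul_of_stronglyMeasurable_left huSM huε_int hεint
    filter_upwards [h1, hcondε] with ω hω1 hω2
    rw [hHdef]; simp only []; rw [hω1, hω2]
  have hHint : Integrable H μ := integrable_condExp.congr hH
  -- reduction: ∫ (d - dstar) ε = ∫ H
  have hred : ∫ ω, (d ω - dstar ω) * ε ω ∂μ = ∫ ω, H ω ∂μ := by
    calc ∫ ω, (d ω - dstar ω) * ε ω ∂μ = ∫ ω, u ω * ε ω ∂μ := integral_congr_ae huε_eq
      _ = ∫ ω, (μ[(fun ω => u ω * ε ω)|mXZ]) ω ∂μ := (integral_condExp hXZ).symm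
      _ = ∫ ω, H ω ∂μ := integral_congr_ae hH
  rw [hred]
  -- ψ and truncation sets
  set ψ : Ω → ℝ := fun ω => N ω / Dn ω * φ ω with hψdef
  have hψSM : StronglyMeasurable[mX] ψ :=
    ((stronglyMeasurable_condExp.measurable.div
      stronglyMeasurable_condExp.measurable).mul hφSM.measurable).stronglyMeasurable
  set s : ℕ → Set Ω := fun n => {ω | |φ ω| ≤ n ∧ |ψ ω| ≤ n} with hsdef
  have hs_meas : ∀ n, MeasurableSet[mX] (s n) := by
    intro n
    have hrfl : s n = (fun ω => |φ ω|) ⁻¹' Set.Iic (n:ℝ)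
        ∩ (fun ω => |ψ ω|) ⁻¹' Set.Iic (n:ℝ) := rfl
    rw [hrfl]
    exact ((continuous_abs.measurable.comp hφSM.measurable) measurableSet_Iic).inter
      ((continuous_abs.measurable.comp hψSM.measurable) measurableSet_Iic)
  set χ : ℕ → Ω → ℝ := fun n => (s n).indicator (fun _ => (1:ℝ)) with hχdef
  have hχSM : ∀ n, StronglyMeasurable[mX] (χ n) := fun n =>
    stronglyMeasurable_const.indicator (hs_meas n)
  have hχbd : ∀ n ω, |χ n ω| ≤ 1 := by
    intro n ω
    by_cases hω : ω ∈ s n <;> simp [hχdef, Set.indicator_of_mem, Set.indicator_of_notMem, hω]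
  have hφχSM : ∀ n, StronglyMeasurable[mX] (fun ω => φ ω * χ n ω) := fun n =>
    hφSM.mul (hχSM n)
  have hψχSM : ∀ n, StronglyMeasurable[mX] (fun ω => ψ ω * χ n ω) := fun n =>
    hψSM.mul (hχSM n)
  have hφχbd : ∀ n ω, |φ ω * χ n ω| ≤ n := by
    intro n ω
    by_cases hω : ω ∈ s n
    · simp only [hχdef, Set.indicator_of_mem hω, mul_one]; exact hω.1
    · simp [hχdef, Set.indicator_of_notMem hω]
  have hψχbd : ∀ n ω, |ψ ω * χ n ω| ≤ n := by
    intro n ω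
    by_cases hω : ω ∈ s n
    · simp only [hχdef, Set.indicator_of_mem hω, mul_one]; exact hω.2
    · simp [hχdef, Set.indicator_of_notMem hω]
  -- each truncated integral is zero
  have hzero : ∀ n, ∫ ω, H ω * χ n ω ∂μ = 0 := by
    intro n
    have hsplit : ∀ ω, H ω * χ n ω
        = (φ ω * χ n ω) * (d ω * lam ω) - (ψ ω * χ n ω) * (lam ω ^ 2 * (σsq ω)⁻¹) := by
      intro ω
      simp only [hHdef, hudef, hψdef]
      ring
    have hi1 : Integrable (fun ω => (φ ω * χ n ω) * (d ω * lam ω)) μ :=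
      hint2.bdd_mul ((hφχSM n).mono hmfin).aestronglyMeasurable
        (ae_of_all _ fun ω => by simpa only [Real.norm_eq_abs] using hφχbd n ω)
    have hi2 : Integrable (fun ω => (ψ ω * χ n ω) * (lam ω ^ 2 * (σsq ω)⁻¹)) μ :=
      hint3.bdd_mul ((hψχSM n).mono hmfin).aestronglyMeasurable
        (ae_of_all _ fun ω => by simpa only [Real.norm_eq_abs] using hψχbd n ω)
    calc ∫ ω, H ω * χ n ω ∂μ
        = ∫ ω, ((φ ω * χ n ω) * (d ω * lam ω)
            - (ψ ω * χ n ω) * (lam ω ^ 2 * (σsq ω)⁻¹)) ∂μ := by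
          exact integral_congr_ae (ae_of_all _ fun ω => hsplit ω)
      _ = (∫ ω, (φ ω * χ n ω) * (d ω * lam ω) ∂μ)
            - ∫ ω, (ψ ω * χ n ω) * (lam ω ^ 2 * (σsq ω)⁻¹) ∂μ := integral_sub hi1 hi2
      _ = (∫ ω, (φ ω * χ n ω) * N ω ∂μ) - ∫ ω, (ψ ω * χ n ω) * Dn ω ∂μ := by
          rw [integral_mul_eq_integral_mul_condExp μ hmfin hint2 (hφχSM n) (hφχbd n),
            integral_mul_eq_integral_mul_condExp μ hmfin hint3 (hψχSM n) (hψχbd n)]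
      _ = ∫ ω, ((φ ω * χ n ω) * N ω - (ψ ω * χ n ω) * Dn ω) ∂μ := by
          rw [integral_sub]
          · exact integrable_condExp.bdd_mul ((hφχSM n).mono hmfin).aestronglyMeasurable
              (ae_of_all _ fun ω => by simpa only [Real.norm_eq_abs] using hφχbd n ω)
          · exact integrable_condExp.bdd_mul ((hψχSM n).mono hmfin).aestronglyMeasurable
              (ae_of_all _ fun ω => by simpa only [Real.norm_eq_abs] using hψχbd n ω)
      _ = 0 := by
          rw [← integral_zero Ω ℝ (μ := μ)]
          refine integral_congr_ae ?_
          filter_upwards [hdenpos] with ω hω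
          have h2 : ψ ω * Dn ω = φ ω * N ω := by
            rw [hψdef]; simp only []
            field_simp
          linear_combination (-(χ n ω)) * h2
  -- dominated convergence
  have hlim : Filter.Tendsto (fun n => ∫ ω, H ω * χ n ω ∂μ) Filter.atTop (nhds (∫ ω, H ω ∂μ)) := by
    refine tendsto_integral_of_dominated_convergence (fun ω => |H ω|)
      (fun n => hHint.aestronglyMeasurable.mul
        (((hχSM n).mono hmfin).aestronglyMeasurable))
      hHint.abs ?_ ?_
    · intro n
      refine ae_of_all _ fun ω => ?_
      rw [Real.norm_eq_abs, abs_mul]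
      calc |H ω| * |χ n ω| ≤ |H ω| * 1 :=
            mul_le_mul_of_nonneg_left (hχbd n ω) (abs_nonneg _)
        _ = |H ω| := mul_one _
    · refine ae_of_all _ fun ω => ?_
      obtain ⟨n₀, hn₀⟩ := exists_nat_ge (max |φ ω| |ψ ω|)
      refine Filter.Tendsto.congr' ?_ tendsto_const_nhds
      filter_upwards [Filter.eventually_ge_atTop n₀] with n hn
      have hωs : ω ∈ s n := by
        constructor
        · exact le_trans (le_trans (le_max_left _ _) hn₀) (by exact_mod_cast hn)
        · exact le_trans (le_trans (le_max_right _ _) hn₀) (by exact_mod_cast hn)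
      simp [hχdef, Set.indicator_of_mem hωs]
  have : Filter.Tendsto (fun _ : ℕ => (0:ℝ)) Filter.atTop (nhds (∫ ω, H ω ∂μ)) := by
    refine hlim.congr fun n => (hzero n)
  exact (tendsto_nhds_unique tendsto_const_nhds this).symm
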